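/- Suppose f is (α,β)-regular and x_* ∈ X solves DEP(X,Φ), i.e. f_x(x_*) ≤ f_x(x) for all x ∈ X. Then for any sequence x_1,…,x_N ∈ X, choosing minimizers x_n* ∈ argmin_{x∈X} f_{x_n}(x), the dynamic regret satisfies Regret^d_N ≥ (α/2) Σ_{n=1}^N ‖x_n* − x_*‖². -/
import Mathlib

open scoped RealInnerProductSpace
open Filter Set Topology

lemma key_aux {E : Type*} [NormedAddCommGroup E] [InnerProductSpace ℝ E]
    (X : Set E) (hXcv : Convex ℝ X) (g : E → ℝ) (Dg : E → E) (α : ℝ)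
    (hsc : ∀ y ∈ X, ∀ z ∈ X, g z + ⟪Dg z, y - z⟫ + α / 2 * ‖y - z‖ ^ 2 ≤ g y)
    (a b : E) (ha : a ∈ X) (hb : b ∈ X) (hmin : ∀ z ∈ X, g a ≤ g z) :
    α / 2 * ‖a - b‖ ^ 2 ≤ g b - g a := by
  set d := b - a with hd
  have hnorm : ‖a - b‖ = ‖d‖ := by rw [hd, norm_sub_rev]
  have hstep : ∀ t ∈ Ioo (0:ℝ) 1, α / 2 * ((1 - t) * ‖d‖ ^ 2) ≤ g b - g a := by
    intro t ht
    obtain ⟨ht0, ht1⟩ := ht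
    set z := a + t • d with hz
    have hzX : z ∈ X := by
      have : (1 - t) • a + t • b ∈ X := hXcv ha hb (by linarith) (by linarith) (by ring)
      have heq : z = (1 - t) • a + t • b := by rw [hz, hd]; module
      rwa [heq]
    have haz : a - z = (-t) • d := by rw [hz]; module
    have hbz : b - z = (1 - t) • d := by rw [hz, hd]; module
    have h1 := hsc a ha z hzX
    have h2 := hsc b hb z hzX
    rw [haz, real_inner_smul_right, norm_smul] at h1
    rw [hbz, real_inner_smul_right, norm_smul] at h2
    rw [show ‖(-t)‖ = t by rw [Real.norm_eq_abs, abs_neg]; exact abs_of_pos ht0] at h1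
    rw [show ‖(1 - t)‖ = 1 - t from Real.norm_of_nonneg (by linarith)] at h2
    have h3 := hmin z hzX
    set s := ⟪Dg z, d⟫
    have hcomb : g a + α / 2 * (t * (1 - t)) * ‖d‖ ^ 2 ≤ (1 - t) * g a + t * g b := by
      nlinarith [mul_le_mul_of_nonneg_left h1 (by linarith : (0:ℝ) ≤ 1 - t),
        mul_le_mul_of_nonneg_left h2 (le_of_lt ht0)]
    have : α / 2 * (t * (1 - t)) * ‖d‖ ^ 2 ≤ t * (g b - g a) := by nlinarith
    nlinarith
  have hne : (𝓝[Ioo (0:ℝ) 1] 0).NeBot := by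
    refine mem_closure_iff_nhdsWithin_neBot.mp ?_
    rw [closure_Ioo (by norm_num : (0:ℝ) ≠ 1)]
    exact ⟨le_refl _, by norm_num⟩
  have hlim : Tendsto (fun t : ℝ => α / 2 * ((1 - t) * ‖d‖ ^ 2)) (𝓝[Ioo (0:ℝ) 1] 0)
      (𝓝 (α / 2 * ‖d‖ ^ 2)) := by
    have hc : Tendsto (fun t : ℝ => α / 2 * ((1 - t) * ‖d‖ ^ 2)) (𝓝 0)
        (𝓝 (α / 2 * ((1 - 0) * ‖d‖ ^ 2))) := by
      exact (Continuous.tendsto (by continuity) 0)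
    simpa using hc.mono_left nhdsWithin_le_nhds
  rw [hnorm]
  exact le_of_tendsto hlim (eventually_nhdsWithin_of_forall hstep)

/-- If `f` is `(α,β)`-regular and `x_*` solves DEP(X,Φ), then for any
sequence `x_1,…,x_N ∈ X` with minimizers `x_n* ∈ argmin_{x∈X} f_{x_n}(x)`,
`Regret^d_N ≥ (α/2) Σ ‖x_n* − x_*‖²`. -/
theorem stmt_13
    {E : Type*} [NormedAddCommGroup E] [InnerProductSpace ℝ E] [FiniteDimensional ℝ E]
    (X : Set E) (hXne : X.Nonempty) (hXcp : IsCompact X) (hXcv : Convex ℝ X)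
    (f : E → E → ℝ) (Df : E → E → E) (α β : ℝ) (hα : 0 ≤ α) (hβ : 0 ≤ β)
    (hsc : ∀ x ∈ X, ∀ y ∈ X, ∀ z ∈ X,
      f x z + ⟪Df x z, y - z⟫ + α / 2 * ‖y - z‖ ^ 2 ≤ f x y)
    (hlip : ∀ x' ∈ X, ∀ x ∈ X, ∀ y ∈ X, ‖Df x x' - Df y x'‖ ≤ β * ‖x - y‖)
    (xsd : E) (hxsd : xsd ∈ X)
    (hDEP : ∀ x ∈ X, f x xsd ≤ f x x)
    (N : ℕ) (x : Fin N → E) (hx : ∀ n, x n ∈ X)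
    (xm : Fin N → E) (hxm : ∀ n, xm n ∈ X ∧ ∀ z ∈ X, f (x n) (xm n) ≤ f (x n) z) :
    α / 2 * ∑ n, ‖xm n - xsd‖ ^ 2
      ≤ ∑ n, (f (x n) (x n) - sInf (f (x n) '' X)) := by
  rw [Finset.mul_sum]
  refine Finset.sum_le_sum fun n _ => ?_
  have hinf : sInf (f (x n) '' X) ≤ f (x n) (xm n) := by
    refine csInf_le ⟨f (x n) (xm n), ?_⟩ ⟨xm n, (hxm n).1, rfl⟩
    rintro r ⟨z, hz, rfl⟩
    exact (hxm n).2 z hz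
  have hkey := key_aux X hXcv (f (x n)) (Df (x n)) α
    (fun y hy z hz => hsc (x n) (hx n) y hy z hz)
    (xm n) xsd (hxm n).1 hxsd (hxm n).2
  have hdep := hDEP (x n) (hx n)
  linarith
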